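/- The coproduct Δ on 𝒜 is a chain map: with Δ(ξ_i) = ξ_i ⊗ 1 + 1 ⊗ ξ_i and Δ(u_k) = u_k ⊗ 1 + 1 ⊗ u_k + ∑_i h_{k-2}(x_i, x_i', x_i'') ξ_i ⊗ ξ_i, one has d(Δ(u_k)) = Δ(d(u_k)), i.e. ∑_i [h_{k-1}(x_i,x_i')ξ_i⊗1 + h_{k-1}(x_i',x_i'')1⊗ξ_i + h_{k-2}(x_i,x_i',x_i'')((x_i - x_i')1⊗ξ_i + (x_i'' - x_i')ξ_i⊗1)] = ∑_i h_{k-1}(x_i, x_i'')(ξ_i⊗1 + 1⊗ξ_i). -/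
import Mathlib


/-- Complete homogeneous symmetric polynomial in two variables,
indexed by an integer degree, with the convention `h m = 0` for `m < 0`. -/
noncomputable def h2Z {R : Type*} [CommRing R] (x y : R) (m : ℤ) : R :=
  if 0 ≤ m then ∑ i ∈ Finset.range (m.toNat + 1), x ^ i * y ^ (m.toNat - i) else 0

/-- Complete homogeneous symmetric polynomial in three variables,
indexed by an integer degree, with the convention `h m = 0` for `m < 0`. -/
noncomputable def h3Z {R : Type*} [CommRing R] (x y z : R) (m : ℤ) : R :=
  if 0 ≤ m then
    ∑ i ∈ Finset.range (m.toNat + 1), ∑ j ∈ Finset.range (m.toNat + 1 - i),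
      x ^ i * y ^ j * z ^ (m.toNat - i - j)
  else 0

section Aux

variable {R : Type*} [CommRing R]


noncomputable def h2N (x y : R) (m : ℕ) : R :=
  ∑ i ∈ Finset.range (m + 1), x ^ i * y ^ (m - i)

noncomputable def h3N (x y z : R) (m : ℕ) : R :=
  ∑ i ∈ Finset.range (m + 1), ∑ j ∈ Finset.range (m + 1 - i),
    x ^ i * y ^ j * z ^ (m - i - j)

lemma h2N_succ_left (x y : R) (m : ℕ) :
    h2N x y (m + 1) = x * h2N x y m + y ^ (m + 1) := by
  rw [h2N, Finset.sum_range_succ', h2N, Finset.mul_sum]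
  simp [pow_succ, mul_comm, mul_assoc, mul_left_comm]

lemma h2N_succ_right (x y : R) (m : ℕ) :
    h2N x y (m + 1) = y * h2N x y m + x ^ (m + 1) := by
  rw [h2N, Finset.sum_range_succ, h2N, Finset.mul_sum]
  congr 1
  · apply Finset.sum_congr rfl
    intro i hi
    simp only [Finset.mem_range] at hi
    have : m + 1 - i = (m - i) + 1 := by omega
    rw [this, pow_succ]
    ring
  · simp

lemma geom2 (x y : R) (m : ℕ) :
    x ^ (m + 1) - y ^ (m + 1) = (x - y) * h2N x y m := by
  have := geom_sum₂_mul x y (m + 1)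
  rw [h2N]
  have h : (∑ i ∈ Finset.range (m + 1), x ^ i * y ^ (m + 1 - 1 - i)) = ∑ i ∈ Finset.range (m+1), x ^ i * y ^ (m - i) := by
    simp
  rw [← h, mul_comm, ← this]

lemma h3N_A (x y z : R) (m : ℕ) :
    h3N x y z (m + 1) = x * h3N x y z m + h2N y z (m + 1) := by
  rw [h3N, Finset.sum_range_succ', h3N, Finset.mul_sum, h2N]
  congr 1
  · apply Finset.sum_congr rfl
    intro i hi
    simp only [Finset.mem_range] at hi
    rw [Finset.mul_sum]
    have h1 : m + 1 + 1 - (i + 1) = m + 1 - i := by omega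
    rw [h1]
    apply Finset.sum_congr rfl
    intro j hj
    simp only [Finset.mem_range] at hj
    have h2 : m + 1 - (i + 1) - j = m - i - j := by omega
    rw [h2, pow_succ]
    ring
  · simp

lemma h3N_C (x y z : R) (m : ℕ) :
    h3N x y z (m + 1) = z * h3N x y z m + h2N x y (m + 1) := by
  rw [h3N]
  have step : ∀ i ∈ Finset.range (m + 2),
      (∑ j ∈ Finset.range (m + 1 + 1 - i), x ^ i * y ^ j * z ^ (m + 1 - i - j))
      = (∑ j ∈ Finset.range (m + 1 - i), x ^ i * y ^ j * z ^ (m + 1 - i - j))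
        + x ^ i * y ^ (m + 1 - i) := by
    intro i hi
    simp only [Finset.mem_range] at hi
    have h1 : m + 1 + 1 - i = (m + 1 - i) + 1 := by omega
    rw [h1, Finset.sum_range_succ]
    have h2 : m + 1 - i - (m + 1 - i) = 0 := by omega
    rw [h2, pow_zero, mul_one]
  rw [Finset.sum_congr rfl step, Finset.sum_add_distrib]
  congr 1
  case _ =>
    rw [h3N, Finset.mul_sum, Finset.sum_range_succ]
    have h3 : m + 1 - (m + 1) = 0 := by omega
    rw [h3]
    simp only [Finset.range_zero, Finset.sum_empty, add_zero]
    apply Finset.sum_congr rfl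
    intro i hi
    simp only [Finset.mem_range] at hi
    rw [Finset.mul_sum]
    apply Finset.sum_congr rfl
    intro j hj
    simp only [Finset.mem_range] at hj
    have h4 : m + 1 - i - j = (m - i - j) + 1 := by omega
    rw [h4, pow_succ]
    try ring

lemma key (x y z : R) (m : ℕ) :
    h2N x z (m + 1) = h2N x y (m + 1) + (z - y) * h3N x y z m ∧
    h2N x z (m + 1) = h2N y z (m + 1) + (x - y) * h3N x y z m := by
  induction m with
  | zero =>
    constructor <;> (simp [h2N, h3N, Finset.sum_range_succ]; try ring)
  | succ m ih =>
    obtain ⟨ih1, ih2⟩ := ih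
    constructor
    · rw [h2N_succ_left x z (m+1), h2N_succ_left x y (m+1), h3N_A, ih1]
      have := geom2 z y (m + 1)
      -- z^(m+2) = y^(m+2) + (z-y) * h2N z y (m+1)?? need h2N y z
      have g : z ^ (m + 1 + 1) - y ^ (m + 1 + 1) = (z - y) * h2N y z (m + 1) := by
        have := geom2 y z (m + 1)
        linear_combination -this
      linear_combination g
    · rw [h2N_succ_right x z (m+1), h2N_succ_right y z (m+1), h3N_C, ih2]
      have g : x ^ (m + 1 + 1) - y ^ (m + 1 + 1) = (x - y) * h2N x y (m + 1) :=
        geom2 x y (m + 1)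
      linear_combination g

lemma h2Z_eq (x y : R) (m : ℤ) (hm : 0 ≤ m) : h2Z x y m = h2N x y m.toNat := by
  rw [h2Z, if_pos hm, h2N]

lemma h3Z_eq (x y z : R) (m : ℤ) (hm : 0 ≤ m) : h3Z x y z m = h3N x y z m.toNat := by
  rw [h3Z, if_pos hm, h3N]

lemma h3Z_neg (x y z : R) (m : ℤ) (hm : m < 0) : h3Z x y z m = 0 := by
  rw [h3Z, if_neg (by omega)]

end Aux

/-- The coproduct `Δ` on `𝒜` is a chain map: `d(Δ(u_k)) = Δ(d(u_k))`, i.e.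
`∑_i [h_{k-1}(x_i,x_i')·ξ_i⊗1 + h_{k-1}(x_i',x_i'')·1⊗ξ_i +
h_{k-2}(x_i,x_i',x_i'')((x_i - x_i')·1⊗ξ_i + (x_i'' - x_i')·ξ_i⊗1)]
= ∑_i h_{k-1}(x_i, x_i'')·(ξ_i⊗1 + 1⊗ξ_i)`.
The identity is linear in the odd elements `ξ_i⊗1 = a i` and `1⊗ξ_i = b i`, so it is
stated in an arbitrary module over the commutative ring of the (even) variables. -/
theorem stmt4 {R : Type*} [CommRing R] {M : Type*} [AddCommGroup M] [Module R M]
    (n : ℕ) (x x' x'' : Fin n → R) (a b : Fin n → M) (k : ℤ) (hk : 1 ≤ k) :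
    ∑ i, (h2Z (x i) (x' i) (k - 1) • a i + h2Z (x' i) (x'' i) (k - 1) • b i
        + h3Z (x i) (x' i) (x'' i) (k - 2) •
            ((x i - x' i) • b i + (x'' i - x' i) • a i))
      = ∑ i, h2Z (x i) (x'' i) (k - 1) • (a i + b i) := by
  apply Finset.sum_congr rfl
  intro i _
  rcases eq_or_lt_of_le hk with h1 | h2
  · subst h1
    rw [h3Z_neg _ _ _ _ (by norm_num)]
    have h0 : ∀ u v : R, h2Z u v ((1:ℤ) - 1) = 1 := by
      intro u v
      rw [h2Z_eq _ _ _ (by norm_num)]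
      simp [h2N]
    rw [h0, h0, h0]
    simp [smul_add]
  · have hk2 : (0:ℤ) ≤ k - 2 := by omega
    have hk1 : (0:ℤ) ≤ k - 1 := by omega
    set m : ℕ := (k - 2).toNat with hm
    have hm1 : (k - 1).toNat = m + 1 := by omega
    rw [h3Z_eq _ _ _ _ hk2, h2Z_eq _ _ _ hk1, h2Z_eq _ _ _ hk1, h2Z_eq _ _ _ hk1, hm1]
    obtain ⟨e1, e2⟩ := key (x i) (x' i) (x'' i) m
    rw [show ((k:ℤ) - 2).toNat = m from rfl, e1]
    match_scalars
    case _ => ring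
    case _ => linear_combination e1 - e2
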